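/- There is an adjoint quadruple between FintypeCat and the category Poly of polynomial functors: the functor n ↦ n·𝓎 (sending a finite set n to the n-fold coproduct of the identity-representable Fin(1, –)) is left adjoint to evaluation at 1 (P ↦ P(1)), which is left adjoint to the constant-polynomial functor (n ↦ the constant functor with value n), which is left adjoint to evaluation at 0 (P ↦ P(0)). -/

import Mathlib

/- STATEMENT 10: There is an adjoint quadruple between `FintypeCat` and the category `PolyCat` of
polynomial functors: `n ↦ n·𝓎` (the `n`-fold coproduct of `Fin(1, –)`) is left adjoint to
evaluation at `1` (`P ↦ P(1)`), which is left adjoint to the constant-polynomial functor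
(`n ↦` the `n`-fold coproduct of the terminal functor `Fin(0, –)`), which is left adjoint to
evaluation at `0` (`P ↦ P(0)`). -/

open CategoryTheory CategoryTheory.Limits Opposite

noncomputable section

attribute [local instance] FintypeCat.fintype

noncomputable instance (X Y : FintypeCat.{0}) : Fintype (X ⟶ Y) := by
  classical exact (Fintype.ofInjective (fun f : X ⟶ Y => (fun x : X => f x))
    (fun f g h => FintypeCat.hom_ext f g (congrFun h)))

/-- The finite coproduct `∐ᵢ Fin(kᵢ, –)` of corepresentable functors `FintypeCat ⥤ FintypeCat`. -/
def polySum {I : Type} [Fintype I] (k : I → FintypeCat.{0}) :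
    FintypeCat.{0} ⥤ FintypeCat.{0} where
  obj X := FintypeCat.of (Σ i, (k i ⟶ X))
  map f := FintypeCat.homMk (fun x => ⟨x.1, x.2 ≫ f⟩)
  map_id X := FintypeCat.hom_ext _ _ (fun x => by
    change (⟨x.1, x.2 ≫ 𝟙 X⟩ : Σ i, (k i ⟶ X)) = x; simp)
  map_comp f g := FintypeCat.hom_ext _ _ (fun x => by
    change (⟨x.1, x.2 ≫ (f ≫ g)⟩ : Σ i, (k i ⟶ _)) = ⟨x.1, (x.2 ≫ f) ≫ g⟩; simp)

/-- A polynomial functor is a finite coproduct of corepresentables. -/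
def IsPolynomial (P : FintypeCat.{0} ⥤ FintypeCat.{0}) : Prop :=
  ∃ (I : Type) (_ : Fintype I) (k : I → FintypeCat.{0}), Nonempty (P ≅ polySum k)

/-- The category of polynomial functors. -/
abbrev PolyCat := ObjectProperty.FullSubcategory IsPolynomial

/-- The empty finite set `0`. -/
abbrev X0 : FintypeCat.{0} := FintypeCat.of PEmpty

/-- A one-element finite set `1`. -/
abbrev X1 : FintypeCat.{0} := FintypeCat.of PUnit

instance subsingX0 (X : FintypeCat.{0}) : Subsingleton (X0 ⟶ X) :=
  ⟨fun f g => FintypeCat.hom_ext f g fun e => (e : PEmpty).elim⟩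

def toX1 (X : FintypeCat.{0}) : X ⟶ X1 := FintypeCat.homMk fun _ => PUnit.unit

lemma toX1_unique {X : FintypeCat.{0}} (f g : X ⟶ X1) : f = g :=
  FintypeCat.hom_ext f g fun _ => rfl

def fromX0 (X : FintypeCat.{0}) : X0 ⟶ X := FintypeCat.homMk fun e => (e : PEmpty).elim

/-- `n ↦ n·𝓎^k`, the `n`-fold coproduct of the functor corepresented by `k`. -/
def corepFamily (k : FintypeCat.{0}) : FintypeCat.{0} ⥤ PolyCat where
  obj n := ⟨polySum (fun _ : n => k), ⟨n, inferInstance, fun _ => k, ⟨Iso.refl _⟩⟩⟩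
  map f := ⟨{ app := fun _ => FintypeCat.homMk fun x => ⟨f x.1, x.2⟩, naturality := fun _ _ _ => rfl }⟩
  map_id _ := rfl
  map_comp _ _ := rfl

/-- Evaluation at `k`. -/
def evalAt (k : FintypeCat.{0}) : PolyCat ⥤ FintypeCat.{0} where
  obj P := P.obj.obj k
  map η := η.hom.app k
  map_id _ := rfl
  map_comp _ _ := rfl

def corepAdj (k : FintypeCat.{0}) : corepFamily k ⊣ evalAt k :=
  Adjunction.mkOfHomEquiv
  { homEquiv := fun n P =>
      { toFun := fun η => FintypeCat.homMk fun x => η.hom.app k ⟨x, 𝟙 k⟩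
        invFun := fun f =>
          ⟨{ app := fun X => FintypeCat.homMk fun x => P.obj.map x.2 (f x.1)
             naturality := fun X Y g => by
              apply FintypeCat.hom_ext; intro x
              exact (ConcreteCategory.congr_hom (P.obj.map_comp x.2 g) (f x.1)) }⟩
        left_inv := fun η => by
          apply ObjectProperty.hom_ext; apply NatTrans.ext
          funext X; apply FintypeCat.hom_ext; intro x
          have h := ConcreteCategory.congr_hom (η.hom.naturality x.2) ⟨x.1, 𝟙 k⟩
          have e : ((corepFamily k).obj n).obj.map x.2 ⟨x.1, 𝟙 k⟩ = x := by
            show (⟨x.1, 𝟙 k ≫ x.2⟩ : Σ _ : n, (k ⟶ X)) = x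
            rw [Category.id_comp]; rfl
          calc P.obj.map x.2 (η.hom.app k ⟨x.1, 𝟙 k⟩)
              = η.hom.app X (((corepFamily k).obj n).obj.map x.2 ⟨x.1, 𝟙 k⟩) := h.symm
            _ = η.hom.app X x := congrArg _ e
        right_inv := fun f => by
          apply FintypeCat.hom_ext; intro x
          exact ConcreteCategory.congr_hom (P.obj.map_id k) (f x) }
    homEquiv_naturality_left_symm := fun _ _ => rfl
    homEquiv_naturality_right := fun _ _ => rfl }

def midAdj : evalAt X1 ⊣ corepFamily X0 :=
  Adjunction.mkOfHomEquiv
  { homEquiv := fun P n =>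
      { toFun := fun g =>
          ⟨{ app := fun X => FintypeCat.homMk fun p => ⟨g (P.obj.map (toX1 X) p), fromX0 X⟩
             naturality := fun X Y h => by
              apply FintypeCat.hom_ext; intro p
              have h1 : P.obj.map (toX1 Y) (P.obj.map h p) = P.obj.map (toX1 X) p := by
                have h2 := ConcreteCategory.congr_hom (P.obj.map_comp h (toX1 Y)) p
                rw [toX1_unique (h ≫ toX1 Y) (toX1 X)] at h2
                exact h2.symm
              show (⟨g (P.obj.map (toX1 Y) (P.obj.map h p)), fromX0 Y⟩ :
                  Σ _ : n, (X0 ⟶ Y)) = ⟨g (P.obj.map (toX1 X) p), fromX0 X ≫ h⟩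
              rw [h1, Subsingleton.elim (fromX0 Y) (fromX0 X ≫ h)] }⟩
        invFun := fun η => FintypeCat.homMk fun p => (η.hom.app X1 p).1
        left_inv := fun g => by
          apply FintypeCat.hom_ext; intro p
          have h : P.obj.map (toX1 X1) p = p := by
            rw [toX1_unique (toX1 X1) (𝟙 X1)]
            exact ConcreteCategory.congr_hom (P.obj.map_id X1) p
          exact ConcreteCategory.congr_arg g h
        right_inv := fun η => by
          apply ObjectProperty.hom_ext; apply NatTrans.ext
          funext X; apply FintypeCat.hom_ext; intro p
          have h := ConcreteCategory.congr_hom (η.hom.naturality (toX1 X)) p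
          have h1 : (η.hom.app X1 (P.obj.map (toX1 X) p)).1 = (η.hom.app X p).1 :=
            congrArg Sigma.fst h
          show (⟨(η.hom.app X1 (P.obj.map (toX1 X) p)).1, fromX0 X⟩ :
              Σ _ : n, (X0 ⟶ X)) = η.hom.app X p
          rw [h1, Subsingleton.elim (fromX0 X) ((η.hom.app X p).2)]; rfl }
    homEquiv_naturality_left_symm := fun _ _ => rfl
    homEquiv_naturality_right := fun _ _ => rfl }

theorem poly_adjoint_quadruple :
    ∃ (L : FintypeCat.{0} ⥤ PolyCat) (E1 : PolyCat ⥤ FintypeCat.{0})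
      (Cst : FintypeCat.{0} ⥤ PolyCat) (E0 : PolyCat ⥤ FintypeCat.{0}),
      -- `L` sends a finite set `n` to `n·𝓎`, the `n`-fold coproduct of `Fin(1, –)`
      (∀ n : FintypeCat.{0}, Nonempty ((L.obj n).obj ≅ polySum (fun _ : n => X1))) ∧
      -- `E1` is evaluation at `1`
      (∀ P : PolyCat, Nonempty (E1.obj P ≅ P.obj.obj X1)) ∧
      -- `Cst` sends a finite set `n` to the constant polynomial `n`,
      -- the `n`-fold coproduct of the terminal functor `Fin(0, –)`
      (∀ n : FintypeCat.{0}, Nonempty ((Cst.obj n).obj ≅ polySum (fun _ : n => X0))) ∧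
      -- `E0` is evaluation at `0`
      (∀ P : PolyCat, Nonempty (E0.obj P ≅ P.obj.obj X0)) ∧
      -- the adjoint quadruple `L ⊣ E1 ⊣ Cst ⊣ E0`
      Nonempty (L ⊣ E1) ∧ Nonempty (E1 ⊣ Cst) ∧ Nonempty (Cst ⊣ E0) := by
  exact ⟨corepFamily X1, evalAt X1, corepFamily X0, evalAt X0,
    fun n => ⟨Iso.refl _⟩, fun P => ⟨Iso.refl _⟩, fun n => ⟨Iso.refl _⟩, fun P => ⟨Iso.refl _⟩,
    ⟨corepAdj X1⟩, ⟨midAdj⟩, ⟨corepAdj X0⟩⟩
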